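/- Fix k̄ > 0 with k̄ ≠ k. For b and a/b sufficiently large, if ξ ∈ C¹([b,a]) with ξ(b) = k̄·ln b and ξ(a) = k·ln a, then ∫_b^a √(1 + ξ'²) r dr ≥ a²/2 − b²/2 + (1/2)·(k·ln a − k̄·ln b)²/(ln a − ln b) − C, where C is independent of a, b. -/

import Mathlib

open MeasureTheory

lemma aux_cauchy (σ r t s u : ℝ) (hs : s^2 = r^2 - σ^2) (hs0 : 0 ≤ s)
    (hu : u^2 = 1 + t^2) (hu0 : 0 ≤ u) (hr : 0 ≤ r) :
    σ * t + s ≤ r * u := by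
  nlinarith [sq_nonneg (σ - s*t), sq_nonneg (r*u + σ*t + s), sq_nonneg (r*u - σ*t - s),
    mul_nonneg hr hu0]

lemma aux_sqrt_lower (σ r s : ℝ) (hs : s^2 = r^2 - σ^2) (hs0 : 0 ≤ s)
    (hσ : σ^2 ≤ r^2) (hr : 0 < r) :
    2*r^4 - σ^2*r^2 - σ^4 ≤ 2*r^3*s := by
  have hA : 0 ≤ 2*r^3*s := by positivity
  have hB : 0 ≤ 2*r^4 - σ^2*r^2 - σ^4 := by nlinarith [sq_nonneg σ, sq_nonneg r]
  have key : 0 ≤ σ^4 * ((r^2 - σ^2)*(3*r^2 + σ^2)) := by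
    have h1 : 0 ≤ r^2 - σ^2 := by linarith
    positivity
  have hA2 : (2*r^3*s)^2 = 4*r^6*(r^2 - σ^2) := by
    rw [show (2*r^3*s)^2 = 4*r^6*s^2 by ring, hs]
  have hsq : (2*r^4 - σ^2*r^2 - σ^4)^2 ≤ (2*r^3*s)^2 := by nlinarith [key, hA2]
  exact (pow_le_pow_iff_left₀ hB hA (by norm_num)).mp hsq

set_option maxHeartbeats 2000000 in
theorem stmt_4 (k kbar : ℝ) (hk : 0 < k) (hkbar : 0 < kbar) (hne : kbar ≠ k) :
    ∃ C B : ℝ, ∀ a b : ℝ, ∀ ξ : ℝ → ℝ,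
      B ≤ b → B ≤ a / b →
      ContDiffOn ℝ 1 ξ (Set.Icc b a) →
      ξ b = kbar * Real.log b → ξ a = k * Real.log a →
      a ^ 2 / 2 - b ^ 2 / 2 +
          (k * Real.log a - kbar * Real.log b) ^ 2 / (2 * (Real.log a - Real.log b)) - C ≤
        ∫ r in b..a, Real.sqrt (1 + (deriv ξ r) ^ 2) * r := by
  set M : ℝ := |k - kbar| with hMdef
  have hM0 : 0 ≤ M := abs_nonneg _
  refine ⟨1/4, (k + 4*M + 1)^4 + 81, ?_⟩
  intro a b ξ hBb hBab hξ hξb hξa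
  have hpow4 : (0:ℝ) ≤ (k + 4*M + 1)^4 := by positivity
  have hb81 : (81:ℝ) ≤ b := by linarith
  have hb1 : (1:ℝ) ≤ b := by linarith
  have hb0 : (0:ℝ) < b := by linarith
  have hab81 : (81:ℝ) ≤ a / b := by linarith
  have ha81b : 81 * b ≤ a := by
    have := (le_div_iff₀ hb0).mp hab81
    linarith
  have hblta : b < a := by nlinarith
  have hba : b ≤ a := hblta.le
  have ha0 : (0:ℝ) < a := by linarith
  set L : ℝ := Real.log a - Real.log b with hLdef
  set D : ℝ := k * Real.log a - kbar * Real.log b with hDdef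
  set σ : ℝ := D / L with hσdef
  have hLlog : L = Real.log (a / b) := (Real.log_div (ne_of_gt ha0) (ne_of_gt hb0)).symm
  have hL1 : 1 ≤ L := by
    rw [hLlog]
    have h3 : Real.exp 1 ≤ a / b := by
      have := Real.exp_one_lt_d9
      linarith
    calc (1:ℝ) = Real.log (Real.exp 1) := (Real.log_exp 1).symm
      _ ≤ Real.log (a / b) := Real.log_le_log (Real.exp_pos 1) h3
  have hL0 : 0 < L := by linarith
  have hlogb0 : 0 ≤ Real.log b := Real.log_nonneg hb1
  -- bound on σ
  have hσb : σ^2 ≤ b := by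
    set q : ℝ := Real.sqrt (Real.sqrt b) with hqdef
    have hkM1 : (0:ℝ) < k + 4*M + 1 := by linarith
    have e1 : (k + 4*M + 1)^2 ≤ Real.sqrt b := by
      rw [show (k+4*M+1)^2 = Real.sqrt (((k+4*M+1)^2)^2) from (Real.sqrt_sq (by positivity)).symm]
      exact Real.sqrt_le_sqrt (by nlinarith)
    have hq1 : k + 4*M + 1 ≤ q := by
      rw [show k+4*M+1 = Real.sqrt ((k+4*M+1)^2) from (Real.sqrt_sq hkM1.le).symm]
      exact Real.sqrt_le_sqrt e1
    have hq0 : (0:ℝ) < q := lt_of_lt_of_le hkM1 hq1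
    have hq2 : q^2 = Real.sqrt b := Real.sq_sqrt (Real.sqrt_nonneg b)
    have hsb2 : (Real.sqrt b)^2 = b := Real.sq_sqrt hb0.le
    have hlogq : Real.log b = 4 * Real.log q := by
      have h : Real.log q = Real.log b / 4 := by
        rw [hqdef, Real.log_sqrt (Real.sqrt_nonneg b), Real.log_sqrt hb0.le]
        ring
      linarith
    have hlogbq : Real.log b ≤ 4*q := by
      have := Real.log_le_sub_one_of_pos hq0
      linarith
    have hDabs : |D| ≤ k*L + M*Real.log b := by
      have hD : D = k*L + (k - kbar)*Real.log b := by rw [hDdef, hLdef]; ring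
      rw [hD]
      calc |k*L + (k - kbar)*Real.log b| ≤ |k*L| + |(k - kbar)*Real.log b| := abs_add_le _ _
        _ = k*L + M*Real.log b := by
            rw [abs_mul, abs_mul, abs_of_nonneg (by linarith : (0:ℝ) ≤ k),
              abs_of_nonneg (by linarith : (0:ℝ) ≤ L), abs_of_nonneg hlogb0, hMdef]
    have hσabs : |σ| ≤ k + M*Real.log b := by
      rw [hσdef, abs_div, abs_of_nonneg hL0.le]
      rw [div_le_iff₀ hL0]
      have hMlog : 0 ≤ M * Real.log b := mul_nonneg hM0 hlogb0
      have hstep : M*Real.log b ≤ M*Real.log b*L := by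
        nlinarith [mul_nonneg hMlog (sub_nonneg.mpr hL1)]
      have hkL : k ≤ k * L := by nlinarith [mul_nonneg hk.le (sub_nonneg.mpr hL1)]
      have : (k + M*Real.log b) * L = k*L + M*Real.log b*L := by ring
      linarith [hDabs, hstep]
    have hσsb : |σ| ≤ Real.sqrt b := by
      have h1 : |σ| ≤ k + 4*M*q := by nlinarith
      have h2 : k + 4*M*q ≤ q*q := by nlinarith
      rw [← hq2]
      calc |σ| ≤ k + 4*M*q := h1
        _ ≤ q*q := h2
        _ = q^2 := by ring
    have := sq_abs σ
    nlinarith [abs_nonneg σ, Real.sqrt_nonneg b]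
  -- integral part
  set g : ℝ → ℝ := derivWithin ξ (Set.Icc b a) with hgdef
  have hgc : ContinuousOn g (Set.Icc b a) :=
    hξ.continuousOn_derivWithin (uniqueDiffOn_Icc hblta) le_rfl
  have hderiveq : ∀ x ∈ Set.Ioo b a, deriv ξ x = g x := by
    intro x hx
    exact (derivWithin_of_mem_nhds (Icc_mem_nhds hx.1 hx.2)).symm
  have hderiv : ∀ x ∈ Set.Ioo b a, HasDerivAt ξ (g x) x := by
    intro x hx
    have hmem : Set.Icc b a ∈ nhds x := Icc_mem_nhds hx.1 hx.2
    have hd : DifferentiableWithinAt ℝ ξ (Set.Icc b a) x :=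
      (hξ.differentiableOn one_ne_zero) x (Set.Ioo_subset_Icc_self hx)
    have hd' : DifferentiableAt ℝ ξ x := hd.differentiableAt hmem
    have heq : g x = deriv ξ x := derivWithin_of_mem_nhds hmem
    rw [heq]
    exact hd'.hasDerivAt
  -- the integrand equals the version with g a.e.
  have hEq : (∫ r in b..a, Real.sqrt (1 + (deriv ξ r) ^ 2) * r)
      = ∫ r in b..a, Real.sqrt (1 + (g r) ^ 2) * r := by
    apply intervalIntegral.integral_congr_ae
    have hae : ∀ᵐ x : ℝ, x ≠ a := by
      rw [MeasureTheory.ae_iff]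
      simp only [not_not, Set.setOf_eq_eq_singleton]
      exact Real.volume_singleton
    filter_upwards [hae] with x hx hxmem
    rw [Set.uIoc_of_le hba] at hxmem
    have hxIoo : x ∈ Set.Ioo b a := ⟨hxmem.1, lt_of_le_of_ne hxmem.2 hx⟩
    rw [hderiveq x hxIoo]
  -- lower comparison function
  set ℓ : ℝ → ℝ := fun r => σ * g r + (r - σ^2/2 * r⁻¹ - σ^4/2 * r^(-3:ℤ)) with hℓdef
  have hptwise : ∀ r ∈ Set.Icc b a, ℓ r ≤ Real.sqrt (1 + (g r) ^ 2) * r := by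
    intro r hr
    have hr0 : 0 < r := lt_of_lt_of_le hb0 hr.1
    have hσr2 : σ^2 ≤ r^2 := by nlinarith [hr.1]
    set t : ℝ := g r with htdef
    set s : ℝ := Real.sqrt (r^2 - σ^2) with hsdef
    set u : ℝ := Real.sqrt (1 + t^2) with hudef
    have hs2 : s^2 = r^2 - σ^2 := Real.sq_sqrt (by linarith)
    have hu2 : u^2 = 1 + t^2 := Real.sq_sqrt (by positivity)
    have h1 : σ * t + s ≤ r * u :=
      aux_cauchy σ r t s u hs2 (Real.sqrt_nonneg _) hu2 (Real.sqrt_nonneg _) hr0.le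
    have h2 : 2*r^4 - σ^2*r^2 - σ^4 ≤ 2*r^3*s :=
      aux_sqrt_lower σ r s hs2 (Real.sqrt_nonneg _) hσr2 hr0
    have h3 : r - σ^2/2 * r⁻¹ - σ^4/2 * r^(-3:ℤ) ≤ s := by
      have hz : r^(-3:ℤ) = (r^3)⁻¹ := by
        rw [zpow_neg]; norm_cast
      have heq : r - σ^2/2 * r⁻¹ - σ^4/2 * r^(-3:ℤ) = (2*r^4 - σ^2*r^2 - σ^4)/(2*r^3) := by
        rw [hz]
        field_simp
      rw [heq, div_le_iff₀ (by positivity : (0:ℝ) < 2*r^3)]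
      linarith
    show σ * t + (r - σ^2/2 * r⁻¹ - σ^4/2 * r^(-3:ℤ)) ≤ u * r
    nlinarith [h1, h3]
  have hrne : ∀ x ∈ Set.Icc b a, x ≠ 0 := fun x hx => ne_of_gt (lt_of_lt_of_le hb0 hx.1)
  have hℓc : ContinuousOn ℓ (Set.Icc b a) := by
    apply (continuousOn_const.mul hgc).add
    apply (continuousOn_id.sub (continuousOn_const.mul (continuousOn_id.inv₀ hrne))).sub
    exact continuousOn_const.mul (continuousOn_id.zpow₀ (-3) (fun x hx => Or.inl (hrne x hx)))
  have hFc : ContinuousOn (fun r => Real.sqrt (1 + (g r) ^ 2) * r) (Set.Icc b a) :=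
    (Real.continuous_sqrt.comp_continuousOn (continuousOn_const.add (hgc.pow 2))).mul
      continuousOn_id
  have hmono : (∫ r in b..a, ℓ r) ≤ ∫ r in b..a, Real.sqrt (1 + (g r) ^ 2) * r := by
    apply intervalIntegral.integral_mono_on hba
    · exact (hℓc.mono (by rw [Set.uIcc_of_le hba])).intervalIntegrable
    · exact (hFc.mono (by rw [Set.uIcc_of_le hba])).intervalIntegrable
    · exact hptwise
  -- value of the lower integral via an antiderivative
  set Φ : ℝ → ℝ := fun r => σ * ξ r + r^2/2 - σ^2/2 * Real.log r - σ^4/2 * (r^(-2:ℤ)/(-2))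
    with hΦdef
  have hΦc : ContinuousOn Φ (Set.Icc b a) := by
    apply ((continuousOn_const.mul hξ.continuousOn).add
      ((continuousOn_pow 2).div_const 2)).sub (continuousOn_const.mul
        (continuousOn_id.log hrne)) |>.sub
    exact continuousOn_const.mul ((continuousOn_id.zpow₀ (-2)
      (fun x hx => Or.inl (hrne x hx))).div_const (-2))
  have hΦderiv : ∀ x ∈ Set.Ioo b a, HasDerivAt Φ (ℓ x) x := by
    intro x hx
    have hx0 : 0 < x := lt_of_lt_of_le hb0 hx.1.le
    have h1 : HasDerivAt (fun r => σ * ξ r) (σ * g x) x := (hderiv x hx).const_mul σ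
    have h2 : HasDerivAt (fun r : ℝ => r^2/2) x x := by
      have := (hasDerivAt_pow 2 x).div_const 2
      refine this.congr_deriv ?_
      push_cast
      ring
    have h3 : HasDerivAt (fun r : ℝ => σ^2/2 * Real.log r) (σ^2/2 * x⁻¹) x :=
      (Real.hasDerivAt_log hx0.ne').const_mul _
    have h4 : HasDerivAt (fun r : ℝ => σ^4/2 * (r^(-2:ℤ)/(-2))) (σ^4/2 * x^(-3:ℤ)) x := by
      have := ((hasDerivAt_zpow (-2) x (Or.inl hx0.ne')).div_const (-2)).const_mul (σ^4/2)
      refine this.congr_deriv ?_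
      push_cast
      ring_nf
    have := ((h1.add h2).sub h3).sub h4
    refine this.congr_deriv ?_
    show σ * g x + x - σ^2/2 * x⁻¹ - σ^4/2 * x^(-3:ℤ) = σ * g x + (x - σ^2/2 * x⁻¹ - σ^4/2 * x^(-3:ℤ))
    ring
  have hℓint : IntervalIntegrable ℓ volume b a :=
    (hℓc.mono (by rw [Set.uIcc_of_le hba])).intervalIntegrable
  have hFTC : (∫ r in b..a, ℓ r) = Φ a - Φ b :=
    intervalIntegral.integral_eq_sub_of_hasDerivAt_of_le hba hΦc hΦderiv hℓint
  have hℓval : (∫ r in b..a, ℓ r)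
      = σ * D + (a^2/2 - b^2/2) - σ^2/2 * L + σ^4/4 * (a^(-2:ℤ) - b^(-2:ℤ)) := by
    rw [hFTC, hΦdef]
    simp only [hξa, hξb]
    rw [hDdef, hLdef]
    ring
  -- final algebra
  rw [hEq]
  have hσD : σ * D - σ^2/2 * L = D^2/(2*L) := by
    rw [hσdef]
    field_simp
    ring
  have herr : σ^4 * (b^(-2:ℤ) - a^(-2:ℤ)) ≤ 1 := by
    have hza : a^(-2:ℤ) = (a^2)⁻¹ := by rw [zpow_neg]; norm_cast
    have hzb : b^(-2:ℤ) = (b^2)⁻¹ := by rw [zpow_neg]; norm_cast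
    rw [hza, hzb]
    have hainv : (0:ℝ) ≤ (a^2)⁻¹ := by positivity
    have hbinv : (0:ℝ) < (b^2)⁻¹ := by positivity
    have hσ4 : σ^4 ≤ b^2 := by nlinarith [sq_nonneg σ]
    have h1 : σ^4 * ((b^2)⁻¹ - (a^2)⁻¹) ≤ σ^4 * (b^2)⁻¹ :=
      mul_le_mul_of_nonneg_left (by linarith) (by positivity)
    have h2 : σ^4 * (b^2)⁻¹ ≤ b^2 * (b^2)⁻¹ :=
      mul_le_mul_of_nonneg_right hσ4 hbinv.le
    have h3 : b^2 * (b^2)⁻¹ = 1 := mul_inv_cancel₀ (by positivity)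
    linarith
  linarith [hmono, hℓval.symm.le, hℓval.le]
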